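/- For every α ∈ (0,1] and x ≠ 0, the fractional heat profile admits the representation p_α(x) = (1/(π |x|^{1+2α})) ∫_0^∞ e^{-u |x|^{-2α}} sin(u^{1/(2α)}) du. -/

import Mathlib

open MeasureTheory Real Set

section auxLemmas

open Filter

private lemma fracHeat_aux_int2 {p : ℝ} (hp : 0 < p) :
    IntegrableOn (fun r : ℝ => r ^ (p - 1) * Real.exp (-r ^ p)) (Ioi 0) := by
  have h : IntegrableOn (fun u : ℝ => Real.exp (-u)) (Ioi 0) := by
    simpa using exp_neg_integrableOn_Ioi 0 one_pos
  have h2 := (integrableOn_Ioi_comp_rpow_iff' (fun u : ℝ => Real.exp (-u)) hp.ne').mpr h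
  simpa [smul_eq_mul] using h2

private lemma fracHeat_aux_int1 {p : ℝ} (hp : 0 < p) :
    IntegrableOn (fun r : ℝ => Real.exp (-r ^ p)) (Ioi 0) := by
  have h : IntegrableOn (fun u : ℝ => Real.exp (-u) * u ^ (1 / p - 1)) (Ioi 0) :=
    Real.GammaIntegral_convergent (by positivity)
  have h2 := (integrableOn_Ioi_comp_rpow_iff'
      (fun u : ℝ => Real.exp (-u) * u ^ (1 / p - 1)) hp.ne').mpr h
  refine (integrableOn_congr_fun (fun t ht => ?_) measurableSet_Ioi).mp h2
  have ht : (0:ℝ) < t := ht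
  rw [smul_eq_mul, ← Real.rpow_mul ht.le]
  have h3 : p * (1 / p - 1) = 1 - p := by field_simp
  rw [h3, mul_comm (rexp _), ← mul_assoc, ← Real.rpow_add ht]
  norm_num

private lemma fracHeat_aux_int3 {p : ℝ} (hp : 0 < p) :
    Integrable (fun ξ : ℝ => Real.exp (-|ξ| ^ p)) := by
  have hIoi : IntegrableOn (fun ξ : ℝ => Real.exp (-|ξ| ^ p)) (Ioi 0) := by
    refine (integrableOn_congr_fun (fun t ht => ?_) measurableSet_Ioi).mpr
      (fracHeat_aux_int1 hp)
    rw [abs_of_pos ht]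
  have hIic : IntegrableOn (fun ξ : ℝ => Real.exp (-|ξ| ^ p)) (Iic 0) := by
    rw [← Measure.map_neg_eq_self (volume : Measure ℝ)]
    have m : MeasurableEmbedding fun x : ℝ => -x := (Homeomorph.neg ℝ).measurableEmbedding
    rw [m.integrableOn_map_iff]
    simp_rw [Function.comp_def, abs_neg, neg_preimage, neg_Iic, neg_zero]
    exact Iff.mpr integrableOn_Ici_iff_integrableOn_Ioi hIoi
  have := hIic.union hIoi
  rwa [Iic_union_Ioi, integrableOn_univ] at this

private lemma fracHeat_stepA {p : ℝ} (hp : 0 < p) (x : ℝ) :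
    (∫ ξ : ℝ, Complex.exp (-((|ξ| ^ p : ℝ) : ℂ)) * Complex.exp (Complex.I * (x:ℂ) * (ξ:ℂ)))
      = ((2 * ∫ t in Ioi (0:ℝ), Real.exp (-t ^ p) * Real.cos (|x| * t) : ℝ) : ℂ) := by
  have hcont : Continuous (fun ξ : ℝ => Real.exp (-|ξ| ^ p)) := by
    apply Real.continuous_exp.comp
    exact (continuous_abs.rpow_const (fun y => Or.inr hp.le)).neg
  have hg1 : Integrable (fun ξ : ℝ => Real.exp (-|ξ| ^ p) * Real.cos (x * ξ)) := by
    refine (fracHeat_aux_int3 hp).mono' ?_ ?_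
    · exact (hcont.mul
        (Real.continuous_cos.comp (continuous_const.mul continuous_id))).aestronglyMeasurable
    · refine Filter.Eventually.of_forall fun t => ?_
      rw [norm_mul, Real.norm_eq_abs, Real.norm_eq_abs, abs_of_pos (Real.exp_pos _)]
      exact mul_le_of_le_one_right (Real.exp_pos _).le (Real.abs_cos_le_one _)
  have hg2 : Integrable (fun ξ : ℝ => Real.exp (-|ξ| ^ p) * Real.sin (x * ξ)) := by
    refine (fracHeat_aux_int3 hp).mono' ?_ ?_
    · exact (hcont.mul
        (Real.continuous_sin.comp (continuous_const.mul continuous_id))).aestronglyMeasurable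
    · refine Filter.Eventually.of_forall fun t => ?_
      rw [norm_mul, Real.norm_eq_abs, Real.norm_eq_abs, abs_of_pos (Real.exp_pos _)]
      exact mul_le_of_le_one_right (Real.exp_pos _).le (Real.abs_sin_le_one _)
  have hrw : ∀ ξ : ℝ,
      Complex.exp (-((|ξ| ^ p : ℝ) : ℂ)) * Complex.exp (Complex.I * (x:ℂ) * (ξ:ℂ))
        = ((Real.exp (-|ξ| ^ p) * Real.cos (x * ξ) : ℝ) : ℂ)
          + ((Real.exp (-|ξ| ^ p) * Real.sin (x * ξ) : ℝ) : ℂ) * Complex.I := by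
    intro ξ
    have : Complex.I * (x:ℂ) * (ξ:ℂ) = ((x * ξ : ℝ) : ℂ) * Complex.I := by push_cast; ring
    rw [this, Complex.exp_mul_I, ← Complex.ofReal_neg, ← Complex.ofReal_exp,
      ← Complex.ofReal_cos, ← Complex.ofReal_sin]
    push_cast
    ring
  simp only [hrw]
  have hg1c : Integrable (fun ξ : ℝ => ((Real.exp (-|ξ| ^ p) * Real.cos (x * ξ) : ℝ) : ℂ)) :=
    hg1.ofReal
  have hg2c : Integrable (fun ξ : ℝ => ((Real.exp (-|ξ| ^ p) * Real.sin (x * ξ) : ℝ) : ℂ)) :=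
    hg2.ofReal
  rw [MeasureTheory.integral_add hg1c (hg2c.mul_const Complex.I)]
  rw [MeasureTheory.integral_mul_const]
  have e1 : (∫ a : ℝ, ((Real.exp (-|a| ^ p) * Real.cos (x * a) : ℝ) : ℂ))
      = ((∫ a : ℝ, Real.exp (-|a| ^ p) * Real.cos (x * a) : ℝ) : ℂ) := integral_ofReal
  have e2 : (∫ a : ℝ, ((Real.exp (-|a| ^ p) * Real.sin (x * a) : ℝ) : ℂ))
      = ((∫ a : ℝ, Real.exp (-|a| ^ p) * Real.sin (x * a) : ℝ) : ℂ) := integral_ofReal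
  rw [e1, e2]
  have hodd : (∫ ξ : ℝ, Real.exp (-|ξ| ^ p) * Real.sin (x * ξ)) = 0 := by
    have h := integral_neg_eq_self
      (fun ξ : ℝ => Real.exp (-|ξ| ^ p) * Real.sin (x * ξ)) (volume : Measure ℝ)
    simp only [abs_neg, mul_neg, Real.sin_neg, mul_neg] at h
    rw [integral_neg] at h
    linarith
  rw [hodd]
  have heven : (∫ ξ : ℝ, Real.exp (-|ξ| ^ p) * Real.cos (x * ξ))
      = 2 * ∫ t in Ioi (0:ℝ), Real.exp (-t ^ p) * Real.cos (|x| * t) := by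
    have h : ∀ ξ : ℝ, Real.exp (-|ξ| ^ p) * Real.cos (x * ξ)
        = (fun t : ℝ => Real.exp (-t ^ p) * Real.cos (|x| * t)) |ξ| := by
      intro ξ
      simp only
      rw [← Real.cos_abs (x * ξ), abs_mul, ← Real.cos_abs (|x| * |ξ|), abs_mul, abs_abs, abs_abs]
    simp only [h]
    exact integral_comp_abs (f := fun t : ℝ => Real.exp (-t ^ p) * Real.cos (|x| * t))
  rw [heven]
  push_cast
  ring

private lemma fracHeat_stepB {p c : ℝ} (hp : 0 < p) (hc : 0 < c) :
    (∫ t in Ioi (0:ℝ), Real.exp (-t ^ p) * Real.cos (c * t))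
      = ∫ t in Ioi (0:ℝ), (p * t ^ (p - 1)) • (Real.exp (-t ^ p) * (Real.sin (c * t) * c⁻¹)) := by
  set u : ℝ → ℝ := fun t => Real.exp (-t ^ p) with hu_def
  set u' : ℝ → ℝ := fun t => Real.exp (-t ^ p) * -(p * t ^ (p - 1)) with hu'_def
  set v : ℝ → ℝ := fun t => Real.sin (c * t) * c⁻¹ with hv_def
  set v' : ℝ → ℝ := fun t => Real.cos (c * t) with hv'_def
  have hu : ∀ t ∈ Ioi (0:ℝ), HasDerivAt u (u' t) t := by
    intro t ht
    exact ((Real.hasDerivAt_rpow_const (p := p) (Or.inl (ne_of_gt ht))).neg).exp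
  have hv : ∀ t ∈ Ioi (0:ℝ), HasDerivAt v (v' t) t := by
    intro t _
    have h1 : HasDerivAt (fun s : ℝ => Real.sin (c * s)) (Real.cos (c * t) * c) t := by
      simpa [mul_comm, Function.comp_def] using (Real.hasDerivAt_sin (c * t)).comp t
        ((hasDerivAt_id t).const_mul c)
    simpa [hv_def, mul_assoc, mul_inv_cancel₀ hc.ne'] using h1.mul_const c⁻¹
  have hcont : Continuous u := by
    apply Real.continuous_exp.comp
    exact (continuous_id.rpow_const (fun y => Or.inr hp.le)).neg
  have huv' : IntegrableOn (u * v') (Ioi 0) := by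
    refine (fracHeat_aux_int1 hp).mono' ?_ ?_
    · exact (hcont.mul (Real.continuous_cos.comp
        (continuous_const.mul continuous_id))).aestronglyMeasurable.restrict
    · refine Filter.Eventually.of_forall fun t => ?_
      simp only [Pi.mul_apply, norm_mul, Real.norm_eq_abs, hu_def, hv'_def,
        abs_of_pos (Real.exp_pos _)]
      exact mul_le_of_le_one_right (Real.exp_pos _).le (Real.abs_cos_le_one _)
  have hu'v : IntegrableOn (u' * v) (Ioi 0) := by
    refine (((fracHeat_aux_int2 hp).const_mul (p * c⁻¹)).mono' ?_ ?_)
    · have hco : ContinuousOn (u' * v) (Ioi (0:ℝ)) := by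
        apply ContinuousOn.mul
        · apply ContinuousOn.mul hcont.continuousOn
          apply ContinuousOn.neg
          apply ContinuousOn.mul continuousOn_const
          intro t ht
          exact (Real.continuousAt_rpow_const t (p - 1) (Or.inl (ne_of_gt ht))).continuousWithinAt
        · exact (((Real.continuous_sin.comp (continuous_const.mul continuous_id)).mul
            continuous_const)).continuousOn
      exact hco.aestronglyMeasurable measurableSet_Ioi
    · rw [ae_restrict_iff' measurableSet_Ioi]
      refine Filter.Eventually.of_forall fun t ht => ?_
      have ht : (0:ℝ) < t := ht
      simp only [Pi.mul_apply, norm_mul, Real.norm_eq_abs, hu'_def, hv_def, abs_neg, abs_mul,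
        abs_of_pos (Real.exp_pos _), abs_of_pos hp, abs_of_pos (inv_pos.mpr hc),
        abs_of_pos (Real.rpow_pos_of_pos ht _)]
      calc Real.exp (-t ^ p) * (p * t ^ (p - 1)) * (|Real.sin (c * t)| * c⁻¹)
          ≤ Real.exp (-t ^ p) * (p * t ^ (p - 1)) * (1 * c⁻¹) := by
            apply mul_le_mul_of_nonneg_left
            · exact mul_le_mul_of_nonneg_right (Real.abs_sin_le_one _) (inv_pos.mpr hc).le
            · positivity
        _ = p * c⁻¹ * (t ^ (p - 1) * Real.exp (-t ^ p)) := by ring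
  have h_zero : Filter.Tendsto (u * v) (nhdsWithin 0 (Ioi (0:ℝ))) (nhds 0) := by
    have hc2 : Continuous (u * v) := hcont.mul
      ((Real.continuous_sin.comp (continuous_const.mul continuous_id)).mul continuous_const)
    have h3 : Filter.Tendsto (u * v) (nhdsWithin 0 (Ioi (0:ℝ))) (nhds ((u * v) 0)) :=
      (hc2.tendsto 0).mono_left nhdsWithin_le_nhds
    simpa [hu_def, hv_def] using h3
  have h_infty : Filter.Tendsto (u * v) Filter.atTop (nhds 0) := by
    have hg : Filter.Tendsto (fun t : ℝ => Real.exp (-t ^ p) * c⁻¹) Filter.atTop (nhds 0) := by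
      have h1 : Filter.Tendsto (fun t : ℝ => Real.exp (-t ^ p)) Filter.atTop (nhds 0) :=
        Real.tendsto_exp_atBot.comp
          ((tendsto_neg_atTop_atBot).comp (tendsto_rpow_atTop hp))
      simpa using h1.mul_const c⁻¹
    refine squeeze_zero_norm (fun t => ?_) hg
    simp only [Pi.mul_apply, norm_mul, Real.norm_eq_abs, hu_def, hv_def,
      abs_of_pos (Real.exp_pos _), abs_mul, abs_of_pos (inv_pos.mpr hc)]
    apply mul_le_mul_of_nonneg_left _ (Real.exp_pos _).le
    exact mul_le_of_le_one_left (inv_pos.mpr hc).le (Real.abs_sin_le_one _)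
  have ibp := integral_Ioi_mul_deriv_eq_deriv_mul hu hv huv' hu'v h_zero h_infty
  simp only [sub_zero, zero_sub] at ibp
  calc (∫ t in Ioi (0:ℝ), Real.exp (-t ^ p) * Real.cos (c * t))
      = ∫ t in Ioi (0:ℝ), u t * v' t := rfl
    _ = - ∫ t in Ioi (0:ℝ), u' t * v t := ibp
    _ = ∫ t in Ioi (0:ℝ), -(u' t * v t) := by rw [integral_neg]
    _ = ∫ t in Ioi (0:ℝ), (p * t ^ (p - 1)) • (Real.exp (-t ^ p) * (Real.sin (c * t) * c⁻¹)) := by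
        refine setIntegral_congr_fun measurableSet_Ioi fun t _ => ?_
        simp only [hu'_def, hv_def, smul_eq_mul]
        ring

private lemma fracHeat_stepC {p c : ℝ} (hp : 0 < p) (hc : 0 < c) :
    (∫ t in Ioi (0:ℝ), (p * t ^ (p - 1)) • (Real.exp (-t ^ p) * (Real.sin (c * t) * c⁻¹)))
      = c⁻¹ * (c ^ (-p) *
          ∫ u in Ioi (0:ℝ), Real.exp (-(u * c ^ (-p))) * Real.sin (u ^ (1 / p))) := by
  set g : ℝ → ℝ := fun u => Real.exp (-u) * Real.sin (c * u ^ (1 / p)) with hg_def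
  have hcp : (0:ℝ) < c ^ (-p) := Real.rpow_pos_of_pos hc _
  have h2 : (∫ t in Ioi (0:ℝ), (p * t ^ (p - 1)) • g (t ^ p)) = ∫ u in Ioi (0:ℝ), g u :=
    integral_comp_rpow_Ioi_of_pos hp
  have h3 : (∫ w in Ioi (0:ℝ), g (c ^ (-p) * w))
      = (c ^ (-p))⁻¹ • ∫ u in Ioi (0:ℝ), g u := by
    have := integral_comp_mul_left_Ioi g 0 hcp
    rwa [mul_zero] at this
  have h3' : (∫ u in Ioi (0:ℝ), g u) = c ^ (-p) * ∫ w in Ioi (0:ℝ), g (c ^ (-p) * w) := by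
    rw [h3, smul_eq_mul, ← mul_assoc, mul_inv_cancel₀ hcp.ne', one_mul]
  calc (∫ t in Ioi (0:ℝ), (p * t ^ (p - 1)) • (Real.exp (-t ^ p) * (Real.sin (c * t) * c⁻¹)))
      = ∫ t in Ioi (0:ℝ), c⁻¹ * ((p * t ^ (p - 1)) • g (t ^ p)) := by
        refine setIntegral_congr_fun measurableSet_Ioi fun t ht => ?_
        have ht : (0:ℝ) < t := ht
        have : (t ^ p) ^ (1 / p) = t := by
          rw [← Real.rpow_mul ht.le, mul_one_div_cancel hp.ne', Real.rpow_one]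
        simp only [hg_def, smul_eq_mul, this]
        ring
    _ = c⁻¹ * ∫ t in Ioi (0:ℝ), (p * t ^ (p - 1)) • g (t ^ p) := integral_const_mul _ _
    _ = c⁻¹ * ∫ u in Ioi (0:ℝ), g u := by rw [h2]
    _ = c⁻¹ * (c ^ (-p) * ∫ w in Ioi (0:ℝ), g (c ^ (-p) * w)) := by rw [← h3']
    _ = c⁻¹ * (c ^ (-p) *
          ∫ u in Ioi (0:ℝ), Real.exp (-(u * c ^ (-p))) * Real.sin (u ^ (1 / p))) := by
        congr 2
        refine setIntegral_congr_fun measurableSet_Ioi fun w hw => ?_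
        have hw : (0:ℝ) < w := hw
        have hx : (c ^ (-p) * w) ^ (1 / p) = c⁻¹ * w ^ (1 / p) := by
          rw [Real.mul_rpow hcp.le hw.le, ← Real.rpow_mul hc.le,
            neg_mul, mul_one_div_cancel hp.ne', Real.rpow_neg_one]
        simp only [hg_def]
        rw [hx, ← mul_assoc, mul_inv_cancel₀ hc.ne', one_mul, mul_comm (c ^ (-p)) w]

end auxLemmas

/-- The one-dimensional fractional heat profile, the inverse Fourier transform of
`ξ ↦ exp (-|ξ|^(2α))`. -/
noncomputable def fracHeatProfile (α : ℝ) (x : ℝ) : ℂ :=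
  (1 / (2 * Real.pi) : ℂ) *
    ∫ ξ : ℝ, Complex.exp (-((|ξ| ^ (2 * α) : ℝ) : ℂ)) *
      Complex.exp (Complex.I * (x : ℂ) * (ξ : ℂ))

theorem stmt_5 (α : ℝ) (hα : α ∈ Set.Ioc (0:ℝ) 1) (x : ℝ) (hx : x ≠ 0) :
    fracHeatProfile α x
      = (((1 / (Real.pi * |x| ^ (1 + 2 * α))) *
          ∫ u in Set.Ioi (0:ℝ),
            Real.exp (-(u * |x| ^ (-(2 * α)))) * Real.sin (u ^ (1 / (2 * α))) : ℝ) : ℂ) := by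
  obtain ⟨hα0, -⟩ := hα
  have hp : (0:ℝ) < 2 * α := by linarith
  have hc : (0:ℝ) < |x| := abs_pos.mpr hx
  rw [fracHeatProfile, fracHeat_stepA hp x, fracHeat_stepB hp hc, fracHeat_stepC hp hc]
  rw [show (1 / (2 * Real.pi) : ℂ) = ((1 / (2 * Real.pi) : ℝ) : ℂ) by push_cast; ring,
    ← Complex.ofReal_mul]
  rw [Complex.ofReal_inj]
  rw [Real.rpow_add hc, Real.rpow_one, Real.rpow_neg hc.le]
  have hπ := Real.pi_ne_zero
  have hcp : (0:ℝ) < |x| ^ (2 * α) := Real.rpow_pos_of_pos hc _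
  field_simp
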